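/- Let (v,x) have a normal basis {v_{ij}} of type (μ;ν), and let E^x = {y ∈ End(V) : xy = yx}. Then E^x v = span{v_{ij} : 1 ≤ i ≤ ℓ(μ), 1 ≤ j ≤ μ_i}; in particular dim(E^x v) = |μ|. -/

import Mathlib

/-- A partition: a nonincreasing sequence of nonnegative integers (indexed from 0)
with finitely many nonzero terms. -/
def IsPartition (f : ℕ → ℕ) : Prop :=
  Antitone f ∧ (Function.support f).Finite

/-- The size `|f| = Σ_i f_i` of a partition. -/
noncomputable def psize (f : ℕ → ℕ) : ℕ := ∑ᶠ i, f i

/-- `nFn f = Σ_{i≥1} (i-1) f_i`, written with 0-indexing as `Σ_i i * f i`. -/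
noncomputable def nFn (f : ℕ → ℕ) : ℕ := ∑ᶠ i, i * f i

/-- Index set of the diagram of `μ + ν`: pairs `(i,j)` (0-indexed row `i`,
position `j`) with `j < μ_i + ν_i`. -/
def BipIdx (μ ν : ℕ → ℕ) : Type := {p : ℕ × ℕ // p.2 < μ p.1 + ν p.1}

section Aux
variable {F V : Type*} [Field F] [AddCommGroup V] [Module F V]
variable {μ ν : ℕ → ℕ} {x : Module.End F V} {b : Module.Basis (BipIdx μ ν) F V}

lemma nb_pow_apply
    (hbx : ∀ p : BipIdx μ ν,
      x (b p) = if p.1.2 = 0 then 0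
        else b ⟨(p.1.1, p.1.2 - 1), lt_of_le_of_lt (Nat.sub_le _ _) p.2⟩)
    (n : ℕ) (p : BipIdx μ ν) :
    (x ^ n) (b p) = if h : n ≤ p.1.2 then
      b ⟨(p.1.1, p.1.2 - n), lt_of_le_of_lt (Nat.sub_le _ _) p.2⟩ else 0 := by
  induction n with
  | zero =>
    simp only [pow_zero, Module.End.one_apply, Nat.zero_le, dif_pos]
    congr 1
  | succ n ih =>
    have hstep : (x ^ (n + 1)) (b p) = x ((x ^ n) (b p)) := by
      rw [pow_succ']; rfl
    rw [hstep, ih]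
    split
    · next h =>
      erw [hbx]
      by_cases h0 : p.1.2 - n = 0
      · rw [if_pos h0, dif_neg (by omega)]
      · rw [if_neg h0, dif_pos (by omega)]
        congr 1
    · next h =>
      rw [map_zero, dif_neg (by omega)]

end Aux

section Aux2
variable {F V : Type*} [Field F] [AddCommGroup V] [Module F V]
variable {μ ν : ℕ → ℕ} {x : Module.End F V} {b : Module.Basis (BipIdx μ ν) F V}

lemma nb_repr_x_basis
    (hbx : ∀ p : BipIdx μ ν,
      x (b p) = if p.1.2 = 0 then 0
        else b ⟨(p.1.1, p.1.2 - 1), lt_of_le_of_lt (Nat.sub_le _ _) p.2⟩)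
    (q r : BipIdx μ ν) :
    b.repr (x (b q)) r = if q.1.1 = r.1.1 ∧ q.1.2 = r.1.2 + 1 then 1 else 0 := by
  classical
  rw [hbx q]
  by_cases h0 : q.1.2 = 0
  · rw [if_pos h0, map_zero, Finsupp.zero_apply, if_neg (by omega)]
  · rw [if_neg h0]
    by_cases hc : q.1.1 = r.1.1 ∧ q.1.2 = r.1.2 + 1
    · have he : (⟨(q.1.1, q.1.2 - 1), lt_of_le_of_lt (Nat.sub_le _ _) q.2⟩ : BipIdx μ ν) = r :=
        Subtype.ext (Prod.ext_iff.mpr ⟨hc.1, show q.1.2 - 1 = r.1.2 by omega⟩)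
      rw [he, Module.Basis.repr_self_apply, if_pos rfl, if_pos hc]
    · erw [if_neg hc, Module.Basis.repr_self_apply, if_neg ?_]
      intro he
      apply hc
      have h1 : ((q.1.1, q.1.2 - 1) : ℕ × ℕ) = r.1 := congrArg (fun z : BipIdx μ ν => z.1) he
      have h4 := Prod.ext_iff.mp h1
      have h2 : q.1.1 = r.1.1 := h4.1
      have h3 : q.1.2 - 1 = r.1.2 := h4.2
      exact ⟨h2, by omega⟩

lemma nb_repr_x
    (hbx : ∀ p : BipIdx μ ν,
      x (b p) = if p.1.2 = 0 then 0
        else b ⟨(p.1.1, p.1.2 - 1), lt_of_le_of_lt (Nat.sub_le _ _) p.2⟩)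
    (w : V) (r : BipIdx μ ν) :
    b.repr (x w) r = if h : r.1.2 + 1 < μ r.1.1 + ν r.1.1
      then b.repr w ⟨(r.1.1, r.1.2 + 1), h⟩ else 0 := by
  classical
  by_cases h : r.1.2 + 1 < μ r.1.1 + ν r.1.1
  · rw [dif_pos h]
    have key : (b.coord r).comp (x : V →ₗ[F] V)
        = b.coord (⟨(r.1.1, r.1.2 + 1), h⟩ : BipIdx μ ν) := by
      apply b.ext
      intro q
      simp only [LinearMap.comp_apply, Module.Basis.coord_apply]
      erw [nb_repr_x_basis hbx, Module.Basis.repr_self_apply]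
      by_cases hc : q.1.1 = r.1.1 ∧ q.1.2 = r.1.2 + 1
      · rw [if_pos hc,
          if_pos (show q = (⟨(r.1.1, r.1.2 + 1), h⟩ : BipIdx μ ν) from
            Subtype.ext (Prod.ext_iff.mpr ⟨hc.1, hc.2⟩))]
      · rw [if_neg hc, if_neg ?_]
        intro he
        apply hc
        have h1 : q.1 = ((r.1.1, r.1.2 + 1) : ℕ × ℕ) := congrArg (fun z : BipIdx μ ν => z.1) he
        exact Prod.ext_iff.mp h1
    have := LinearMap.congr_fun key w
    exact this
  · rw [dif_neg h]
    have key : (b.coord r).comp (x : V →ₗ[F] V) = (0 : V →ₗ[F] F) := by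
      apply b.ext
      intro q
      simp only [LinearMap.comp_apply, Module.Basis.coord_apply, LinearMap.zero_apply]
      rw [nb_repr_x_basis hbx, if_neg ?_]
      intro hc
      have hq2 := q.2
      rw [hc.1] at hq2
      omega
    have := LinearMap.congr_fun key w
    simpa only [LinearMap.comp_apply, Module.Basis.coord_apply, LinearMap.zero_apply] using this

end Aux2

noncomputable def nbCoord {F V : Type*} [Field F] [AddCommGroup V] [Module F V]
    {μ ν : ℕ → ℕ} (b : Module.Basis (BipIdx μ ν) F V) (w : V) (i j : ℕ) : F :=
  if h : j < μ i + ν i then b.repr w ⟨(i, j), h⟩ else 0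

section Aux3
variable {F V : Type*} [Field F] [AddCommGroup V] [Module F V]
variable {μ ν : ℕ → ℕ} {x : Module.End F V} {b : Module.Basis (BipIdx μ ν) F V}

variable (hbx : ∀ p : BipIdx μ ν,
      x (b p) = if p.1.2 = 0 then 0
        else b ⟨(p.1.1, p.1.2 - 1), lt_of_le_of_lt (Nat.sub_le _ _) p.2⟩)
include hbx

lemma nbCoord_x (w : V) (i j : ℕ) :
    nbCoord b (x w) i j = nbCoord b w i (j + 1) := by
  unfold nbCoord
  by_cases h : j < μ i + ν i
  · erw [dif_pos h, nb_repr_x hbx]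
  · rw [dif_neg h, dif_neg (by omega)]

lemma nbCoord_pow (n : ℕ) (w : V) (i j : ℕ) :
    nbCoord b ((x ^ n) w) i j = nbCoord b w i (j + n) := by
  induction n generalizing w with
  | zero => rw [pow_zero]; rfl
  | succ n ih =>
    have h1 : (x ^ (n + 1)) w = (x ^ n) (x w) := by rw [pow_succ]; rfl
    rw [h1, ih (x w), nbCoord_x hbx]
    congr 1

lemma nbCoord_eq_zero (m : ℕ) (w : V) (hw : (x ^ m) w = 0) (i j : ℕ) (hj : m ≤ j) :
    nbCoord b w i j = 0 := by
  have h1 : j = (j - m) + m := by omega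
  rw [h1, ← nbCoord_pow hbx m w i (j - m), hw]
  simp [nbCoord]; intro _; rfl

lemma nb_term_mem (hμ : Antitone μ) (hν : Antitone ν) (i : ℕ)
    (w : V) (hw : (x ^ (μ i + ν i)) w = 0) :
    (x ^ ν i) w ∈ Submodule.span F (b '' {p : BipIdx μ ν | p.1.2 < μ p.1.1}) := by
  rw [Module.Basis.mem_span_image]
  intro r hr
  rw [Finset.mem_coe, Finsupp.mem_support_iff] at hr
  by_contra hrT
  apply hr
  have hrT' : μ r.1.1 ≤ r.1.2 := le_of_not_gt hrT
  have hcoord : b.repr ((x ^ ν i) w) r = nbCoord b ((x ^ ν i) w) r.1.1 r.1.2 := by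
    unfold nbCoord
    rw [dif_pos r.2]
    congr
  rw [hcoord, nbCoord_pow hbx]

  rcases le_or_gt (μ i) (μ r.1.1) with hle | hlt
  · exact nbCoord_eq_zero hbx _ w hw _ _ (by omega)
  · have hik : i < r.1.1 := by
      by_contra hik
      exact absurd (hμ (le_of_not_gt hik)) (not_le.mpr hlt)
    have hνk : ν r.1.1 ≤ ν i := hν (le_of_lt hik)
    unfold nbCoord
    rw [dif_neg (by omega)]

end Aux3

section Aux4
variable {F V : Type*} [Field F] [AddCommGroup V] [Module F V]
variable {μ ν : ℕ → ℕ} {x : Module.End F V} {b : Module.Basis (BipIdx μ ν) F V}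

lemma nb_exists_y
    (hbx : ∀ p : BipIdx μ ν,
      x (b p) = if p.1.2 = 0 then 0
        else b ⟨(p.1.1, p.1.2 - 1), lt_of_le_of_lt (Nat.sub_le _ _) p.2⟩)
    (p : BipIdx μ ν) (hp : p.1.2 < μ p.1.1) :
    ∃ y : Module.End F V, x * y = y * x ∧
      (∀ i : ℕ, ∀ hle : μ i - 1 < μ i + ν i,
        y (b ⟨(i, μ i - 1), hle⟩) = if i = p.1.1 then b p else 0) := by
  classical
  set s := μ p.1.1 - 1 - p.1.2 with hs
  refine ⟨b.constr F fun q => if h : q.1.1 = p.1.1 ∧ s ≤ q.1.2 then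
      b ⟨(p.1.1, q.1.2 - s), by
        rcases h with ⟨h1, -⟩
        rw [← h1]
        exact lt_of_le_of_lt (Nat.sub_le _ _) q.2⟩ else 0, ?_, ?_⟩
  · apply b.ext
    intro q
    rw [Module.End.mul_apply, Module.End.mul_apply, Module.Basis.constr_basis, hbx q]
    by_cases h0 : q.1.2 = 0
    · rw [if_pos h0, map_zero]
      by_cases hq : q.1.1 = p.1.1 ∧ s ≤ q.1.2
      · erw [dif_pos hq, hbx, if_pos (show q.1.2 - s = 0 by omega)]
      · rw [dif_neg hq, map_zero]
    · erw [if_neg h0, Module.Basis.constr_basis]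
      by_cases hq : q.1.1 = p.1.1 ∧ s ≤ q.1.2
      · erw [dif_pos hq, hbx]
        by_cases hz : q.1.2 - s = 0
        · have hsq : s = q.1.2 := by omega
          rw [if_pos hz, dif_neg (fun hc => absurd hc.2 (show ¬ s ≤ q.1.2 - 1 by omega))]
        · rw [if_neg hz, dif_pos ⟨hq.1, show s ≤ q.1.2 - 1 by omega⟩]
          congr 1
          exact Subtype.ext (Prod.ext_iff.mpr ⟨rfl, show q.1.2 - s - 1 = q.1.2 - 1 - s by omega⟩)
      · rw [dif_neg hq, map_zero, dif_neg ?_]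
        intro hc
        exact hq ⟨hc.1, le_trans hc.2 (Nat.sub_le _ _)⟩
  · intro i hle
    erw [Module.Basis.constr_basis]
    by_cases hip : i = p.1.1
    · subst hip
      rw [if_pos rfl, dif_pos ⟨rfl, show s ≤ μ p.1.1 - 1 by omega⟩]
      congr 1
      exact Subtype.ext (Prod.ext_iff.mpr ⟨rfl, show μ p.1.1 - 1 - s = p.1.2 by omega⟩)
    · rw [if_neg hip, dif_neg (fun hc => hip hc.1)]

end Aux4

noncomputable def psize' (f : ℕ → ℕ) : ℕ := ∑ᶠ i, f i

lemma count_T {μ ν : ℕ → ℕ} [Fintype (BipIdx μ ν)] (hμf : (Function.support μ).Finite) :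
    ({p : BipIdx μ ν | p.1.2 < μ p.1.1}).toFinset.card = psize' μ := by
  classical
  have hcards : ({p : BipIdx μ ν | p.1.2 < μ p.1.1}).toFinset.card
      = (hμf.toFinset.biUnion fun i => {i} ×ˢ Finset.range (μ i)).card := by
    apply Finset.card_bij (fun p _ => p.1)
    · intro a ha
      rw [Set.mem_toFinset] at ha
      have ha' : a.1.2 < μ a.1.1 := ha
      rw [Finset.mem_biUnion]
      refine ⟨a.1.1, ?_, ?_⟩
      · rw [Set.Finite.mem_toFinset, Function.mem_support]; omega
      · rw [Finset.mem_product]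
        exact ⟨Finset.mem_singleton_self _, Finset.mem_range.mpr ha'⟩
    · intro a ha c hc hac
      exact Subtype.ext hac
    · intro z hz
      rw [Finset.mem_biUnion] at hz
      obtain ⟨i, hi, hz2⟩ := hz
      rw [Finset.mem_product, Finset.mem_singleton, Finset.mem_range] at hz2
      have hz1 : z.1 = i := hz2.1
      have hlt : z.2 < μ z.1 + ν z.1 := by
        have h2 := hz2.2
        rw [hz1]
        omega
      refine ⟨⟨z, hlt⟩, ?_, rfl⟩
      apply Set.mem_toFinset.mpr
      show z.2 < μ z.1
      rw [hz1]
      exact hz2.2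
  have hdisj : ∀ a ∈ hμf.toFinset, ∀ c ∈ hμf.toFinset, a ≠ c →
      Disjoint ({a} ×ˢ Finset.range (μ a)) ({c} ×ˢ Finset.range (μ c)) := by
    intro a _ c _ hac
    rw [Finset.disjoint_left]
    intro z hz1 hz2
    rw [Finset.mem_product, Finset.mem_singleton] at hz1 hz2
    exact hac (hz1.1 ▸ hz2.1)
  rw [hcards, Finset.card_biUnion hdisj]
  unfold psize'
  rw [finsum_eq_sum μ hμf]
  refine Finset.sum_congr rfl fun i _ => ?_
  rw [Finset.card_product, Finset.card_singleton, Finset.card_range, one_mul]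

/-- `b` is a normal basis of type `(μ;ν)` for `(v,x)`: it is a Jordan basis for `x`
of shape `μ + ν` (so `x b_{i,j} = b_{i,j-1}` and `x b_{i,0} = 0`), and
`v = Σ_{i : μ_i > 0} b_{i, μ_i - 1}`. -/
def IsNormalBasis {F V : Type*} [Field F] [AddCommGroup V] [Module F V]
    (μ ν : ℕ → ℕ) (v : V) (x : Module.End F V) (b : Module.Basis (BipIdx μ ν) F V) : Prop :=
  (∀ p : BipIdx μ ν,
    x (b p) = if p.1.2 = 0 then 0
      else b ⟨(p.1.1, p.1.2 - 1), lt_of_le_of_lt (Nat.sub_le _ _) p.2⟩) ∧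
  v = ∑ᶠ i : {i : ℕ // 0 < μ i},
        b ⟨(i.1, μ i.1 - 1),
           lt_of_lt_of_le (Nat.sub_lt i.2 Nat.one_pos) (Nat.le_add_right _ _)⟩

/-- If `b` is a normal basis of type `(μ;ν)` for `(v,x)`, then
`E^x v = span{b_{ij} : 1 ≤ i ≤ ℓ(μ), j ≤ μ_i}`; in particular `dim (E^x v) = |μ|`. -/
theorem centralizer_orbit_of_v {F V : Type*} [Field F] [AddCommGroup V] [Module F V]
    [FiniteDimensional F V]
    (μ ν : ℕ → ℕ) (hμ : IsPartition μ) (hν : IsPartition ν)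
    (v : V) (x : Module.End F V) (b : Module.Basis (BipIdx μ ν) F V)
    (hb : IsNormalBasis μ ν v x b) :
    Submodule.map ((LinearMap.applyₗ v : Module.End F V →ₗ[F] V))
        (LinearMap.ker (LinearMap.mulLeft F x - LinearMap.mulRight F x)) =
      Submodule.span F {w : V | ∃ p : BipIdx μ ν, p.1.2 < μ p.1.1 ∧ w = b p} ∧
    Module.finrank F
      ↥(Submodule.map ((LinearMap.applyₗ v : Module.End F V →ₗ[F] V))
        (LinearMap.ker (LinearMap.mulLeft F x - LinearMap.mulRight F x))) = psize μ := by
  classical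
  obtain ⟨hbx, hbv⟩ := hb
  haveI : Fintype (BipIdx μ ν) := FiniteDimensional.fintypeBasisIndex b
  have hfin : ({i : ℕ | 0 < μ i}).Finite :=
    hμ.2.subset (fun i hi => Function.mem_support.mpr (by have h0 : 0 < μ i := hi; omega))
  haveI hfin' : Finite {i : ℕ // 0 < μ i} := hfin.to_subtype
  haveI : Fintype {i : ℕ // 0 < μ i} := Fintype.ofFinite _
  rw [finsum_eq_sum_of_fintype] at hbv
  have hSet : {w : V | ∃ p : BipIdx μ ν, p.1.2 < μ p.1.1 ∧ w = b p}
      = b '' {p : BipIdx μ ν | p.1.2 < μ p.1.1} := by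
    ext w
    constructor
    · rintro ⟨q, h1, h2⟩
      exact ⟨q, h1, h2.symm⟩
    · rintro ⟨q, h1, h2⟩
      exact ⟨q, h1, h2.symm⟩
  have hmain : Submodule.map ((LinearMap.applyₗ v : Module.End F V →ₗ[F] V))
        (LinearMap.ker (LinearMap.mulLeft F x - LinearMap.mulRight F x))
      = Submodule.span F (b '' {p : BipIdx μ ν | p.1.2 < μ p.1.1}) := by
    apply le_antisymm
    · rintro u ⟨y, hy, rfl⟩
      have hcomm : x * y = y * x := by
        have h1 := LinearMap.mem_ker.mp hy
        have h2 : LinearMap.mulLeft F x y - LinearMap.mulRight F x y = 0 := by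
          rw [← LinearMap.sub_apply, h1]
        rw [LinearMap.mulLeft_apply, LinearMap.mulRight_apply, sub_eq_zero] at h2
        exact h2
      have hyx : ∀ (n : ℕ) (u : V), y ((x ^ n) u) = (x ^ n) (y u) := by
        intro n u
        have hc : x ^ n * y = y * x ^ n := ((show Commute x y from hcomm).pow_left n).eq
        calc y ((x ^ n) u) = (y * x ^ n) u := rfl
          _ = (x ^ n * y) u := by rw [hc]
          _ = (x ^ n) (y u) := rfl
      show y v ∈ _
      rw [hbv, map_sum]
      apply Submodule.sum_mem
      intro i _
      have hpos : 0 < μ i.1 := i.2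
      have htop : (μ i.1 + ν i.1) - 1 < μ i.1 + ν i.1 := by omega
      have h1 : b ⟨(i.1, μ i.1 - 1),
            lt_of_lt_of_le (Nat.sub_lt i.2 Nat.one_pos) (Nat.le_add_right _ _)⟩
          = (x ^ ν i.1) (b ⟨(i.1, μ i.1 + ν i.1 - 1), htop⟩) := by
        erw [nb_pow_apply hbx, dif_pos (show ν i.1 ≤ μ i.1 + ν i.1 - 1 by omega)]
        congr 1
        exact Subtype.ext (Prod.ext_iff.mpr
          ⟨rfl, show μ i.1 - 1 = μ i.1 + ν i.1 - 1 - ν i.1 by omega⟩)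
      rw [h1, hyx (ν i.1)]
      have hzero : (x ^ (μ i.1 + ν i.1)) (y (b ⟨(i.1, μ i.1 + ν i.1 - 1), htop⟩)) = 0 := by
        erw [← hyx, nb_pow_apply hbx,
          dif_neg (show ¬ μ i.1 + ν i.1 ≤ μ i.1 + ν i.1 - 1 by omega), map_zero]
      exact nb_term_mem hbx hμ.1 hν.1 i.1 _ hzero
    · rw [Submodule.span_le]
      rintro w ⟨q, hq, rfl⟩
      have hq' : q.1.2 < μ q.1.1 := hq
      obtain ⟨y, hcomm, hval⟩ := nb_exists_y hbx q hq'
      refine ⟨y, ?_, ?_⟩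
      · rw [SetLike.mem_coe, LinearMap.mem_ker, LinearMap.sub_apply, LinearMap.mulLeft_apply,
          LinearMap.mulRight_apply, sub_eq_zero]
        exact hcomm
      · show y v = b q
        rw [hbv, map_sum]
        have hqpos : 0 < μ q.1.1 := by omega
        rw [Finset.sum_eq_single (⟨q.1.1, hqpos⟩ : {i : ℕ // 0 < μ i})]
        · rw [hval q.1.1, if_pos rfl]
        · intro j _ hj
          rw [hval j.1, if_neg (fun hc => hj (Subtype.ext hc))]
        · intro habs
          exact absurd (Finset.mem_univ _) habs
  refine ⟨hSet ▸ hmain, ?_⟩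
  rw [hmain]
  have hli : LinearIndependent F
      ((↑) : (b '' {p : BipIdx μ ν | p.1.2 < μ p.1.1}) → V) :=
    LinearIndepOn.id_image
      (b.linearIndependent.comp ((↑) : {p : BipIdx μ ν | p.1.2 < μ p.1.1} → BipIdx μ ν)
        Subtype.val_injective)
  rw [finrank_span_set_eq_card hli, Set.toFinset_image,
    Finset.card_image_of_injective _ b.injective]
  exact count_T hμ.2
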